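/- For every permutation w ∈ S_n and every subsequence T of the λ-chain Γ, the content vector of the filling f(w,T) is congruent to w(μ(T)) modulo the line ℝ(1,…,1) ⊂ ℝⁿ. In particular, w(μ(T)) depends only on the filling f(w,T). -/

import Mathlib

open Finset

namespace Compress

attribute [local instance] Classical.propDecidable

noncomputable section

/-! ### Permutations of `{1,…,n}`, 1-based conventions -/

/-- The 1-based index `i ∈ {1,…,n}` as an element of `Fin n`. -/
def idx (n : ℕ) [NeZero n] (i : ℕ) : Fin n :=
  ⟨(i - 1) % n, Nat.mod_lt _ (Nat.pos_of_ne_zero (NeZero.ne n))⟩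

/-- The 1-based value `w(i) ∈ {1,…,n}` of a permutation `w ∈ S_n`. -/
def pv {n : ℕ} [NeZero n] (w : Equiv.Perm (Fin n)) (i : ℕ) : ℕ :=
  (w (idx n i)).val + 1

/-- The transposition `(i,k)` of `{1,…,n}` (1-based). -/
def tr (n : ℕ) [NeZero n] (i k : ℕ) : Equiv.Perm (Fin n) :=
  Equiv.swap (idx n i) (idx n k)

/-- The Coxeter length of `w ∈ S_n`, i.e. its number of inversions. -/
def len {n : ℕ} [NeZero n] (w : Equiv.Perm (Fin n)) : ℕ :=
  ((Finset.univ : Finset (Fin n × Fin n)).filter fun p => p.1 < p.2 ∧ w p.2 < w p.1).card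

/-- Right multiplication of `w` by a list of transpositions (given as 1-based pairs),
taken from left to right. -/
def applyTs {n : ℕ} [NeZero n] (w : Equiv.Perm (Fin n)) (L : List (ℕ × ℕ)) :
    Equiv.Perm (Fin n) :=
  L.foldl (fun u p => u * tr n p.1 p.2) w

/-! ### Subsequences of a list of transpositions, encoded by sets of positions -/

/-- The subsequence of the list `Δ` of transpositions occupying the (0-based) positions in `J`,
listed in increasing order of positions. -/
def pickP (Δ : List (ℕ × ℕ)) (J : Finset ℕ) : List (ℕ × ℕ) :=
  (J.sort (· ≤ ·)).map fun r => Δ.getD r (0, 0)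

/-- `w r_1 ⋯ r_s` where `r_1,…,r_s` is the subsequence of `Δ` at positions `J`. -/
def wT {n : ℕ} [NeZero n] (w : Equiv.Perm (Fin n)) (Δ : List (ℕ × ℕ)) (J : Finset ℕ) :
    Equiv.Perm (Fin n) :=
  applyTs w (pickP Δ J)

/-- The partial product `w r_1 ⋯ r_{a-1}` just before using the entry at position `r ∈ J`. -/
def stepPerm {n : ℕ} [NeZero n] (w : Equiv.Perm (Fin n)) (Δ : List (ℕ × ℕ)) (J : Finset ℕ)
    (r : ℕ) : Equiv.Perm (Fin n) :=
  applyTs w (pickP Δ (J.filter fun x => x < r))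

/-- The entry at position `r ∈ J` is positive in the increasing-length convention:
`ℓ(w r_1⋯r_{a−1}) < ℓ(w r_1⋯r_a)`. -/
def isPosInc {n : ℕ} [NeZero n] (w : Equiv.Perm (Fin n)) (Δ : List (ℕ × ℕ)) (J : Finset ℕ)
    (r : ℕ) : Prop :=
  len (stepPerm w Δ J r) <
    len (stepPerm w Δ J r * tr n (Δ.getD r (0, 0)).1 (Δ.getD r (0, 0)).2)

/-- The entry at position `r ∈ J` is positive in the decreasing-length convention
(a positive folding): `ℓ(w r_1⋯r_{a−1}) > ℓ(w r_1⋯r_a)`. -/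
def isPosDec {n : ℕ} [NeZero n] (w : Equiv.Perm (Fin n)) (Δ : List (ℕ × ℕ)) (J : Finset ℕ)
    (r : ℕ) : Prop :=
  len (stepPerm w Δ J r * tr n (Δ.getD r (0, 0)).1 (Δ.getD r (0, 0)).2) <
    len (stepPerm w Δ J r)

/-! ### The field `ℚ(q,t)` -/

/-- The field `ℚ(q,t)` of rational functions in two variables. -/
abbrev Kqt : Type := FractionRing (MvPolynomial (Fin 2) ℚ)

/-- The variable `q` of `ℚ(q,t)`. -/
def qq : Kqt := algebraMap (MvPolynomial (Fin 2) ℚ) Kqt (MvPolynomial.X 0)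

/-- The variable `t` of `ℚ(q,t)`. -/
def tt : Kqt := algebraMap (MvPolynomial (Fin 2) ℚ) Kqt (MvPolynomial.X 1)

/-! ### The partition λ, its diagram and statistics on fillings -/

/-- `conj n lam j = λ'_j`, the length of column `j`. -/
def conj (n : ℕ) (lam : ℕ → ℕ) (j : ℕ) : ℕ :=
  ((Finset.Icc 1 (n - 1)).filter fun i => j ≤ lam i).card

/-- The cells `(i,j)` of the Young diagram of λ: `1 ≤ i ≤ n−1`, `1 ≤ j ≤ λ_i`. -/
def cells (n : ℕ) (lam : ℕ → ℕ) : Finset (ℕ × ℕ) :=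
  (Finset.Icc 1 (n - 1) ×ˢ Finset.Icc 1 (lam 1)).filter fun c => c.2 ≤ lam c.1

/-- Two cells attack each other: same column, or consecutive columns with the
left-column cell strictly above the right-column cell (column `j+1` is left of column `j`). -/
def attack (u v : ℕ × ℕ) : Prop :=
  (u.2 = v.2 ∧ u.1 ≠ v.1) ∨ (u.2 = v.2 + 1 ∧ u.1 < v.1) ∨ (v.2 = u.2 + 1 ∧ v.1 < u.1)

/-- `u` comes before `v` in the reading order (columns right to left, i.e. column 1 first,
each column top to bottom). -/
def readBefore (u v : ℕ × ℕ) : Prop :=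
  u.2 < v.2 ∨ (u.2 = v.2 ∧ u.1 < v.1)

/-- σ is a nonattacking filling of λ with entries in `{1,…,n}`, i.e. `σ ∈ T(λ,n)`. -/
def NonAttacking (n : ℕ) (lam : ℕ → ℕ) (σ : ℕ × ℕ → ℕ) : Prop :=
  (∀ u ∈ cells n lam, σ u ∈ Finset.Icc 1 n) ∧
    ∀ u ∈ cells n lam, ∀ v ∈ cells n lam, attack u v → σ u ≠ σ v

/-- The descent set of a filling. -/
def DesSet (n : ℕ) (lam : ℕ → ℕ) (σ : ℕ × ℕ → ℕ) : Finset (ℕ × ℕ) :=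
  (cells n lam).filter fun u => (u.1, u.2 + 1) ∈ cells n lam ∧ σ (u.1, u.2 + 1) < σ u

/-- `Diff(σ)`. -/
def DiffSet (n : ℕ) (lam : ℕ → ℕ) (σ : ℕ × ℕ → ℕ) : Finset (ℕ × ℕ) :=
  (cells n lam).filter fun u => (u.1, u.2 + 1) ∈ cells n lam ∧ σ (u.1, u.2 + 1) ≠ σ u

/-- `arm(i,j) = λ_i − j`. -/
def armC (lam : ℕ → ℕ) (u : ℕ × ℕ) : ℕ := lam u.1 - u.2

/-- `leg(i,j) = λ'_j − i`. -/
def legC (n : ℕ) (lam : ℕ → ℕ) (u : ℕ × ℕ) : ℕ := conj n lam u.2 - u.1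

/-- `maj(σ) = Σ_{u ∈ Des(σ)} arm(u)`. -/
def majStat (n : ℕ) (lam : ℕ → ℕ) (σ : ℕ × ℕ → ℕ) : ℕ :=
  ∑ u ∈ DesSet n lam σ, armC lam u

/-- `|Inv(σ)|`: the number of pairs of attacking cells `u` before `v` in reading order
with `σ(u) > σ(v)`. -/
def invPairsL (n : ℕ) (lam : ℕ → ℕ) (σ : ℕ × ℕ → ℕ) : ℕ :=
  ((cells n lam ×ˢ cells n lam).filter fun x =>
    attack x.1 x.2 ∧ readBefore x.1 x.2 ∧ σ x.2 < σ x.1).card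

/-- `inv(σ) = |Inv(σ)| − Σ_{u ∈ Des(σ)} leg(u)`. -/
def invStat (n : ℕ) (lam : ℕ → ℕ) (σ : ℕ × ℕ → ℕ) : ℤ :=
  (invPairsL n lam σ : ℤ) - ∑ u ∈ DesSet n lam σ, (legC n lam u : ℤ)

/-- `n(λ) = Σ_i (i−1) λ_i`. -/
def nlam (n : ℕ) (lam : ℕ → ℕ) : ℕ :=
  ∑ i ∈ Finset.Icc 1 n, (i - 1) * lam i

/-- The Haglund–Haiman–Loehr-type weight of a filling:
`HHL(σ) = t^{n(λ)−inv(σ)} q^{maj(σ)} Π_{u∈Diff(σ)} (1−t)/(1−q^{arm(u)} t^{leg(u)+1})`. -/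
def HHL (n : ℕ) (lam : ℕ → ℕ) (σ : ℕ × ℕ → ℕ) : Kqt :=
  tt ^ ((nlam n lam : ℤ) - invStat n lam σ) * qq ^ majStat n lam σ *
    ∏ u ∈ DiffSet n lam σ, (1 - tt) / (1 - qq ^ armC lam u * tt ^ (legC n lam u + 1))

/-! ### The λ-chain Γ -/

/-- The row `(i,n),(i,n−1),…,(i,low)`. -/
def rowL (n i low : ℕ) : List (ℕ × ℕ) :=
  (List.range (n + 1 - low)).map fun r => (i, n - r)

/-- `Γ(k)`: rows `i = k, k−1, …, 1`, row `i` being `(i,n),…,(i,k+1)`. -/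
def GammaK (n k : ℕ) : List (ℕ × ℕ) :=
  (List.range k).flatMap fun s => rowL n (k - s) (k + 1)

/-- `Γ'(k)`: rows `i = k, k−1, …, 1`, row `i` being `(i,n),…,(i,k+2)`
(the last transposition `(i,k+1)` of each row of `Γ(k)` removed). -/
def GammaK' (n k : ℕ) : List (ℕ × ℕ) :=
  (List.range k).flatMap fun s => rowL n (k - s) (k + 2)

/-- The λ-chain `Γ = Γ_{λ_1} Γ_{λ_1−1} ⋯ Γ_2`, where `Γ_j = Γ'(λ'_j)` if
`j = min{i : λ'_i = λ'_j}` (equivalently `λ'_{j−1} ≠ λ'_j`) and `Γ_j = Γ(λ'_j)` otherwise.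
Each entry records its segment index `j` together with the root `(i,k)`. -/
def lamChain (n : ℕ) (lam : ℕ → ℕ) : List (ℕ × ℕ × ℕ) :=
  (List.range (lam 1 - 1)).flatMap fun s =>
    let j := lam 1 - s
    let seg :=
      if conj n lam (j - 1) = conj n lam j then GammaK n (conj n lam j)
      else GammaK' n (conj n lam j)
    seg.map fun p => (j, p.1, p.2)

/-- The underlying list of roots (transpositions) of the λ-chain. -/
def chainRoots (Γ : List (ℕ × ℕ × ℕ)) : List (ℕ × ℕ) := Γ.map fun e => e.2

/-! ### The Ram–Yip weight and the filling map -/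

/-- The Ram–Yip weight `RY(w,T)` of a folding pair, where `T` is the subsequence of the
λ-chain at positions `J`. -/
def RY (n : ℕ) [NeZero n] (lam : ℕ → ℕ) (w : Equiv.Perm (Fin n)) (J : Finset ℕ) : Kqt :=
  tt ^ (((len w : ℤ) - (len (wT w (chainRoots (lamChain n lam)) J) : ℤ) - (J.card : ℤ)) / 2) *
    (1 - tt) ^ J.card *
    ∏ r ∈ J,
      (let e := (lamChain n lam).getD r (0, 0, 0)
       let a := lam e.2.1 - (e.1 - 1)
       if isPosDec w (chainRoots (lamChain n lam)) J r then
         (1 - qq ^ a * tt ^ (e.2.2 - e.2.1))⁻¹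
       else qq ^ a * tt ^ (e.2.2 - e.2.1) * (1 - qq ^ a * tt ^ (e.2.2 - e.2.1))⁻¹)

/-- `π_j = w T_{λ_1} ⋯ T_{j+1}`: the product of `w` with the entries of `T` lying in the
segments of column index `> j`. -/
def pij (n : ℕ) [NeZero n] (lam : ℕ → ℕ) (w : Equiv.Perm (Fin n)) (J : Finset ℕ) (j : ℕ) :
    Equiv.Perm (Fin n) :=
  applyTs w (pickP (chainRoots (lamChain n lam))
    (J.filter fun r => j < ((lamChain n lam).getD r (0, 0, 0)).1))

/-- The filling map `f`: `f(w,T)(i,j) = π_j(i)` on cells of λ (and `0` off the diagram). -/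
def fmap (n : ℕ) [NeZero n] (lam : ℕ → ℕ) (w : Equiv.Perm (Fin n)) (J : Finset ℕ) :
    ℕ × ℕ → ℕ :=
  fun c => if c ∈ cells n lam then pv (pij n lam w J c.2) c.1 else 0

/-- The fiber `f⁻¹(σ)` of the filling map over σ, inside `ℱ(λ)`. -/
def fiberSet (n : ℕ) [NeZero n] (lam : ℕ → ℕ) (σ : ℕ × ℕ → ℕ) :
    Finset (Equiv.Perm (Fin n) × Finset ℕ) :=
  (Finset.univ ×ˢ (Finset.range (lamChain n lam).length).powerset).filter
    fun p => ∀ u ∈ cells n lam, fmap n lam p.1 p.2 u = σ u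

/-- The Finset of all nonattacking fillings `T(λ,n)` (normalized to vanish off the diagram). -/
def TFinset (n : ℕ) (lam : ℕ → ℕ) : Finset (ℕ × ℕ → ℕ) :=
  (((cells n lam).pi fun _ => Finset.Icc 1 n).image
      fun g c => if h : c ∈ cells n lam then g c h else 0).filter
    fun σ => NonAttacking n lam σ

/-- The monomial `x^{content(σ)} = x_1^{c_1} ⋯ x_n^{c_n}` in `ℚ(q,t)[x_1,…,x_n]`. -/
def contentMon (n : ℕ) [NeZero n] (lam : ℕ → ℕ) (σ : ℕ × ℕ → ℕ) :
    MvPolynomial (Fin n) Kqt :=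
  ∏ a ∈ Finset.Icc 1 n,
    (MvPolynomial.X (idx n a)) ^ (((cells n lam).filter fun c => σ c = a).card)

/-! ### The weight μ(T) and the content vector (for Statement 4) -/

/-- `l_r = #{r' ≤ r : β_{r'} = β_r}` for the `r`-th entry of the λ-chain (0-based positions). -/
def lcount (Γ : List (ℕ × ℕ × ℕ)) (r : ℕ) : ℕ :=
  ((List.range (r + 1)).filter fun r' => (Γ.getD r' (0, 0, 0)).2 = (Γ.getD r (0, 0, 0)).2).length

/-- The affine map `r̂_r : v ↦ v − (v_i − v_k − l_r)(e_i − e_k)` of `ℝⁿ`,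
for the `r`-th entry `(i,k)` of the λ-chain. -/
def hatr (n : ℕ) [NeZero n] (Γ : List (ℕ × ℕ × ℕ)) (r : ℕ) (v : Fin n → ℝ) : Fin n → ℝ :=
  fun x =>
    v x - (v (idx n (Γ.getD r (0, 0, 0)).2.1) - v (idx n (Γ.getD r (0, 0, 0)).2.2)
            - (lcount Γ r : ℝ)) *
      ((if x = idx n (Γ.getD r (0, 0, 0)).2.1 then (1 : ℝ) else 0) -
        (if x = idx n (Γ.getD r (0, 0, 0)).2.2 then (1 : ℝ) else 0))

/-- `μ(T) = r̂_{j_1} r̂_{j_2} ⋯ r̂_{j_s}(λ) ∈ ℝⁿ` for `T` the subsequence of the λ-chain at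
positions `J = {j_1 < … < j_s}`. -/
def muT (n : ℕ) [NeZero n] (lam : ℕ → ℕ) (J : Finset ℕ) : Fin n → ℝ :=
  (J.sort (· ≤ ·)).foldr (hatr n (lamChain n lam)) fun x => (lam (x.val + 1) : ℝ)

/-- The action of `S_n` on `ℝⁿ` by permuting coordinates: `(w(v))_{w(i)} = v_i`. -/
def wAct {n : ℕ} [NeZero n] (w : Equiv.Perm (Fin n)) (v : Fin n → ℝ) : Fin n → ℝ :=
  fun x => v (w⁻¹ x)

/-- The content vector of a filling, as an element of `ℝⁿ`. -/
def contentVec (n : ℕ) (lam : ℕ → ℕ) (σ : ℕ × ℕ → ℕ) : Fin n → ℝ :=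
  fun x => (((cells n lam).filter fun c => σ c = x.val + 1).card : ℝ)

/-! ### Row sums (Statements 5 and 6) -/

/-- The weight of a subsequence `T` (at positions `J`) of a list `Δ` of transpositions, in the
single-`q` setting: `t^{(ℓ(wT)−ℓ(w)−|T|)/2}(1−t)^{|T|} Π_{(i,k)∈T⁺} 1/(1−q t^{k−i})
Π_{(i,k)∈T⁻} q t^{k−i}/(1−q t^{k−i})`, positivity in the increasing-length convention. -/
def RYrow (n : ℕ) [NeZero n] (w : Equiv.Perm (Fin n)) (Δ : List (ℕ × ℕ)) (J : Finset ℕ) : Kqt :=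
  tt ^ (((len (wT w Δ J) : ℤ) - (len w : ℤ) - (J.card : ℤ)) / 2) * (1 - tt) ^ J.card *
    ∏ r ∈ J,
      (let e := Δ.getD r (0, 0)
       if isPosInc w Δ J r then (1 - qq * tt ^ (e.2 - e.1))⁻¹
       else qq * tt ^ (e.2 - e.1) * (1 - qq * tt ^ (e.2 - e.1))⁻¹)

/-- `Δ = ((1,p+2),(1,p+3),…,(1,n))`. -/
def delta5 (n p : ℕ) : List (ℕ × ℕ) :=
  (List.range (n - p - 1)).map fun r => (1, p + 2 + r)

/-- `Δ = ((i,p+1),(i,p+2),…,(i,n))`. -/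
def delta6 (n i p : ℕ) : List (ℕ × ℕ) :=
  (List.range (n - p)).map fun r => (i, p + 1 + r)

/-! ### The field `ℚ(q_1,…,q_p,t)` and two-column fillings (Statements 7, 9, 10) -/

/-- The field `ℚ(q_1,…,q_p,t)` of rational functions in `p+1` variables. -/
abbrev Kq (p : ℕ) : Type := FractionRing (MvPolynomial (Fin (p + 1)) ℚ)

/-- The variable `q_i` (for `1 ≤ i ≤ p`). -/
def qv (p i : ℕ) : Kq p :=
  algebraMap (MvPolynomial (Fin (p + 1)) ℚ) (Kq p)
    (MvPolynomial.X ⟨(i - 1) % (p + 1), Nat.mod_lt _ (Nat.succ_pos p)⟩)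

/-- The variable `t`. -/
def tv (p : ℕ) : Kq p :=
  algebraMap (MvPolynomial (Fin (p + 1)) ℚ) (Kq p) (MvPolynomial.X ⟨p, Nat.lt_succ_self p⟩)

/-- The multi-`q` weight of a subsequence `T` (at positions `J`) of `Δ`:
`t^{(ℓ(wT)−ℓ(w)−|T|)/2}(1−t)^{|T|} Π_{(i,k)∈T⁺} 1/(1−q_i t^{k−i})
Π_{(i,k)∈T⁻} q_i t^{k−i}/(1−q_i t^{k−i})`, positivity in the increasing-length convention. -/
def RYmulti (n p : ℕ) [NeZero n] (w : Equiv.Perm (Fin n)) (Δ : List (ℕ × ℕ)) (J : Finset ℕ) :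
    Kq p :=
  tv p ^ (((len (wT w Δ J) : ℤ) - (len w : ℤ) - (J.card : ℤ)) / 2) * (1 - tv p) ^ J.card *
    ∏ r ∈ J,
      (let e := Δ.getD r (0, 0)
       if isPosInc w Δ J r then (1 - qv p e.1 * tv p ^ (e.2 - e.1))⁻¹
       else qv p e.1 * tv p ^ (e.2 - e.1) * (1 - qv p e.1 * tv p ^ (e.2 - e.1))⁻¹)

/-- `Δ = ((1,p+1),…,(1,n),(2,p+1),…,(2,n),…,(p,p+1),…,(p,n))`. -/
def delta7 (n p : ℕ) : List (ℕ × ℕ) :=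
  (List.range p).flatMap fun s => (List.range (n - p)).map fun r => (s + 1, p + 1 + r)

/-- The cells of the two-column filling `C_2C_1`, with right column (column 1) of length `p'`
and left column (column 2) of length `p`. -/
def cells2 (p p' : ℕ) : Finset (ℕ × ℕ) :=
  (Finset.Icc 1 p' ×ˢ ({1} : Finset ℕ)) ∪ (Finset.Icc 1 p ×ˢ ({2} : Finset ℕ))

/-- The entry of the two-column filling `C_2C_1` at a cell. -/
def entry2 (C2 C1 : ℕ → ℕ) : ℕ × ℕ → ℕ :=
  fun c => if c.2 = 1 then C1 c.1 else C2 c.1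

/-- `|Inv(C_2C_1)|`: the number of pairs of attacking cells `u` before `v` in reading order
with `entry(u) > entry(v)`. -/
def invPairs2 (C2 C1 : ℕ → ℕ) (p p' : ℕ) : ℕ :=
  ((cells2 p p' ×ˢ cells2 p p').filter fun x =>
    attack x.1 x.2 ∧ readBefore x.1 x.2 ∧ entry2 C2 C1 x.2 < entry2 C2 C1 x.1).card

/-- `inv(C_2C_1) = |Inv(C_2C_1)| − Σ_{u ∈ Des(C_2C_1)} leg(u)` where
`Des(C_2C_1) = {(i,1) : i ≤ p, C_1(i) > C_2(i)}` and `leg(i,1) = p' − i`. -/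
def inv2 (C2 C1 : ℕ → ℕ) (p p' : ℕ) : ℤ :=
  (invPairs2 C2 C1 p p' : ℤ) -
    ∑ i ∈ (Finset.Icc 1 p).filter fun i => C2 i < C1 i, ((p' : ℤ) - (i : ℤ))

/-- `inv(C) = #{(i,k) : i < k, C(i) > C(k)}` for a single column `C` of length `p`. -/
def invColumn (C : ℕ → ℕ) (p : ℕ) : ℕ :=
  ((Finset.Icc 1 p ×ˢ Finset.Icc 1 p).filter fun x => x.1 < x.2 ∧ C x.2 < C x.1).card

end

end Compress

namespace Compress


lemma countP_flatMap {α β : Type*} (p : α → Bool) (l : List β) (f : β → List α) :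
    (l.flatMap f).countP p = (l.map fun b => (f b).countP p).sum := by
  induction l with
  | nil => simp
  | cons a l ih => simp [List.flatMap_cons, List.countP_append, ih]

lemma take_eq_map_range {α : Type*} (l : List α) (d : α) (N : ℕ) (h : N ≤ l.length) :
    l.take N = (List.range N).map fun r => l.getD r d := by
  apply List.ext_getElem
  · simp; omega
  · intro i h1 h2
    simp only [List.getElem_take, List.getElem_map, List.getElem_range]
    rw [List.getD_eq_getElem]

lemma countP_eq_ite_of_nodup {α : Type*} [DecidableEq α] (l : List α) (h : l.Nodup) (b : α) :
    l.countP (fun a => decide (a = b)) = if b ∈ l then 1 else 0 := by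
  induction l with
  | nil => simp
  | cons a l ih =>
    simp only [List.countP_cons, List.nodup_cons] at *
    rcases eq_or_ne a b with rfl | hab
    · simp [ih h.2, h.1]
    · simp [hab, Ne.symm hab, ih h.2]

lemma flatMap_decomp {α β : Type*} (f : β → List α) (d : α) :
    ∀ (l : List β) (r : ℕ), r < (l.flatMap f).length →
      ∃ l₁ x l₂ o, l = l₁ ++ x :: l₂ ∧ o < (f x).length ∧
        (l.flatMap f).getD r d = (f x).getD o d ∧
        (l.flatMap f).take (r + 1) = l₁.flatMap f ++ (f x).take (o + 1) := by
  intro l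
  induction l with
  | nil => intro r hr; simp at hr
  | cons y l ih =>
    intro r hr
    by_cases hc : r < (f y).length
    · refine ⟨[], y, l, r, rfl, hc, ?_, ?_⟩
      · rw [List.flatMap_cons, List.getD_append _ _ _ _ hc]
      · rw [List.flatMap_cons, List.take_append_of_le_length (by omega)]
        simp
    · rw [List.flatMap_cons, List.length_append] at hr
      obtain ⟨l₁, x, l₂, o, h1, h2, h3, h4⟩ := ih (r - (f y).length) (by omega)
      refine ⟨y :: l₁, x, l₂, o, by rw [h1]; rfl, h2, ?_, ?_⟩
      · rw [List.flatMap_cons, List.getD_append_right _ _ _ _ (by omega), h3]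
      · rw [List.flatMap_cons]
        have : r + 1 = (f y).length + (r - (f y).length + 1) := by omega
        rw [this, List.take_append, List.take_of_length_le (by omega), Nat.add_sub_cancel_left, h4, List.flatMap_cons, List.append_assoc]

lemma range_decomp {N : ℕ} {l₁ l₂ : List ℕ} {x : ℕ} (h : List.range N = l₁ ++ x :: l₂) :
    x = l₁.length ∧ l₁.length < N ∧ l₁ = List.range l₁.length := by
  have hlen : N = l₁.length + (x :: l₂).length := by
    have := congrArg List.length h; simpa using this
  have hx : (List.range N)[l₁.length]'(by simp [hlen]) = x := by
    simp only [h, List.getElem_append_right (le_refl l₁.length)]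
    simp
  simp at hx
  refine ⟨hx.symm, by simp [hlen], ?_⟩
  have h2 : l₁ = (List.range N).take l₁.length := by rw [h, List.take_append_of_le_length (le_refl _)]; simp
  conv_lhs => rw [h2]
  rw [List.take_range]
  congr 1
  omega

lemma sort_min_cons (J : Finset ℕ) (hJ : J.Nonempty) :
    J.sort (· ≤ ·) = J.min' hJ :: (J.erase (J.min' hJ)).sort (· ≤ ·) := by
  conv_lhs => rw [← Finset.insert_erase (J.min'_mem hJ)]
  rw [Finset.sort_insert]
  · intro b hb
    exact J.min'_le b (Finset.mem_of_mem_erase hb)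
  · simp

lemma sum_map_list_range {M : Type*} [AddCommMonoid M] (g : ℕ → M) (N : ℕ) :
    ((List.range N).map g).sum = ∑ s ∈ Finset.range N, g s := by
  induction N with
  | zero => simp
  | succ N ih => rw [List.range_succ, Finset.sum_range_succ, List.map_append, List.sum_append, ih]; simp


/-! ### Segment structure lemmas -/

lemma mem_rowL {n i low a b : ℕ} :
    (a, b) ∈ rowL n i low ↔ a = i ∧ low ≤ b ∧ b ≤ n := by
  simp only [rowL, List.mem_map, List.mem_range, Prod.mk.injEq]
  constructor
  · rintro ⟨r, hr, rfl, rfl⟩; omega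
  · rintro ⟨rfl, h1, h2⟩; exact ⟨n - b, by omega, rfl, by omega⟩

lemma mem_GammaK {n κ a b : ℕ} :
    (a, b) ∈ GammaK n κ ↔ 1 ≤ a ∧ a ≤ κ ∧ κ + 1 ≤ b ∧ b ≤ n := by
  simp only [GammaK, List.mem_flatMap, List.mem_range, mem_rowL]
  constructor
  · rintro ⟨s, hs, rfl, h⟩; omega
  · rintro ⟨h1, h2, h3, h4⟩; exact ⟨κ - a, by omega, by omega, h3, h4⟩

lemma mem_GammaK' {n κ a b : ℕ} :
    (a, b) ∈ GammaK' n κ ↔ 1 ≤ a ∧ a ≤ κ ∧ κ + 2 ≤ b ∧ b ≤ n := by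
  simp only [GammaK', List.mem_flatMap, List.mem_range, mem_rowL]
  constructor
  · rintro ⟨s, hs, rfl, h⟩; omega
  · rintro ⟨h1, h2, h3, h4⟩; exact ⟨κ - a, by omega, by omega, h3, h4⟩

lemma nodup_rowL {n i low : ℕ} : (rowL n i low).Nodup := by
  refine (List.nodup_range).map_on ?_
  intro r hr r' hr' h
  simp only [List.mem_range] at hr hr'
  have : n - r = n - r' := congrArg Prod.snd h
  omega

lemma nodup_GammaK {n κ : ℕ} : (GammaK n κ).Nodup := by
  rw [GammaK, List.nodup_flatMap]
  refine ⟨fun _ _ => nodup_rowL, ?_⟩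
  rw [List.pairwise_iff_getElem]
  intro a b ha hb hab
  simp only [List.length_range] at ha hb
  simp only [List.getElem_range, Function.onFun]
  intro p hp hq
  obtain ⟨pa, pb⟩ := p
  rw [mem_rowL] at hp hq
  omega

lemma nodup_GammaK' {n κ : ℕ} : (GammaK' n κ).Nodup := by
  rw [GammaK', List.nodup_flatMap]
  refine ⟨fun _ _ => nodup_rowL, ?_⟩
  rw [List.pairwise_iff_getElem]
  intro a b ha hb hab
  simp only [List.length_range] at ha hb
  simp only [List.getElem_range, Function.onFun]
  intro p hp hq
  obtain ⟨pa, pb⟩ := p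
  rw [mem_rowL] at hp hq
  omega

/-- The `j`-th segment of the λ-chain (untagged). -/
def segL (n : ℕ) (lam : ℕ → ℕ) (j : ℕ) : List (ℕ × ℕ) :=
  if conj n lam (j - 1) = conj n lam j then GammaK n (conj n lam j)
  else GammaK' n (conj n lam j)

/-- The `s`-th tagged segment of the λ-chain. -/
def fseg (n : ℕ) (lam : ℕ → ℕ) (s : ℕ) : List (ℕ × ℕ × ℕ) :=
  (segL n lam (lam 1 - s)).map fun p => (lam 1 - s, p.1, p.2)

lemma lamChain_eq (n : ℕ) (lam : ℕ → ℕ) :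
    lamChain n lam = (List.range (lam 1 - 1)).flatMap (fseg n lam) := rfl

lemma nodup_segL {n : ℕ} {lam : ℕ → ℕ} {j : ℕ} : (segL n lam j).Nodup := by
  unfold segL; split_ifs
  · exact nodup_GammaK
  · exact nodup_GammaK'

lemma segL_bounds {n : ℕ} {lam : ℕ → ℕ} {j : ℕ} {p : ℕ × ℕ} (hp : p ∈ segL n lam j) :
    1 ≤ p.1 ∧ p.1 ≤ conj n lam j ∧ conj n lam j < p.2 ∧ p.2 ≤ n := by
  obtain ⟨a, b⟩ := p
  unfold segL at hp
  split_ifs at hp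
  · rw [mem_GammaK] at hp; exact ⟨hp.1, hp.2.1, by omega, hp.2.2.2⟩
  · rw [mem_GammaK'] at hp; exact ⟨hp.1, hp.2.1, by omega, hp.2.2.2⟩

lemma conj_anti {n : ℕ} {lam : ℕ → ℕ} {j j' : ℕ} (h : j ≤ j') :
    conj n lam j' ≤ conj n lam j := by
  apply Finset.card_le_card
  intro a ha
  simp only [Finset.mem_filter] at ha ⊢
  exact ⟨ha.1, le_trans h ha.2⟩

lemma conj_le {n : ℕ} {lam : ℕ → ℕ} {j : ℕ} : conj n lam j ≤ n - 1 := by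
  refine le_trans (Finset.card_filter_le _ _) ?_
  simp [Nat.card_Icc]

lemma lam_anti {n : ℕ} {lam : ℕ → ℕ}
    (hreg : ∀ i, 1 ≤ i → i < n → lam (i + 1) < lam i)
    {a b : ℕ} (ha : 1 ≤ a) (hab : a ≤ b) (hb : b ≤ n) : lam b ≤ lam a := by
  induction b with
  | zero => exact absurd (ha.trans hab) (by omega)
  | succ b ih =>
    rcases Nat.lt_or_ge a (b + 1) with h | h
    · have hb1 : 1 ≤ b := by omega
      have h1 := hreg b hb1 (by omega)
      have h2 := ih (by omega) (by omega)
      omega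
    · have : a = b + 1 := by omega
      rw [this]

lemma le_conj_iff {n : ℕ} {lam : ℕ → ℕ}
    (hreg : ∀ i, 1 ≤ i → i < n → lam (i + 1) < lam i)
    {i j : ℕ} (hi : 1 ≤ i) (hi' : i ≤ n - 1) :
    i ≤ conj n lam j ↔ j ≤ lam i := by
  unfold conj
  constructor
  · intro hc
    by_contra hj
    have hsub : (Finset.Icc 1 (n - 1)).filter (fun a => j ≤ lam a) ⊆ Finset.Icc 1 (i - 1) := by
      intro b hb
      simp only [Finset.mem_filter, Finset.mem_Icc] at hb ⊢
      rcases hb with ⟨⟨hb1, hb2⟩, hbj⟩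
      have : ¬ i ≤ b := fun hib => hj (le_trans hbj (lam_anti hreg hi hib (by omega)))
      omega
    have := Finset.card_le_card hsub
    rw [Nat.card_Icc] at this
    omega
  · intro hj
    have hsub : Finset.Icc 1 i ⊆ (Finset.Icc 1 (n - 1)).filter (fun a => j ≤ lam a) := by
      intro a ha
      simp only [Finset.mem_filter, Finset.mem_Icc] at ha ⊢
      exact ⟨⟨ha.1, by omega⟩, le_trans hj (lam_anti hreg ha.1 ha.2 (by omega))⟩
    have := Finset.card_le_card hsub
    rw [Nat.card_Icc] at this
    omega

lemma mem_segL_iff {n : ℕ} {lam : ℕ → ℕ} {i k j0 j : ℕ} (hi1 : 1 ≤ i)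
    (hik : i ≤ conj n lam j0) (hk1 : conj n lam j0 < k) (hkn : k ≤ n) (hj : j0 < j) :
    ((i, k) ∈ segL n lam j) ↔ i ≤ conj n lam j := by
  have h1 : conj n lam j ≤ conj n lam j0 := conj_anti (le_of_lt hj)
  unfold segL
  split_ifs with hc
  · rw [mem_GammaK]; omega
  · have h2 : conj n lam (j - 1) ≤ conj n lam j0 := conj_anti (by omega)
    have h3 : conj n lam j ≤ conj n lam (j - 1) := conj_anti (by omega)
    rw [mem_GammaK']; omega

lemma countP_segL {n : ℕ} {lam : ℕ → ℕ} {i k j0 j : ℕ} (hi1 : 1 ≤ i)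
    (hik : i ≤ conj n lam j0) (hk1 : conj n lam j0 < k) (hkn : k ≤ n) (hj : j0 < j) :
    (segL n lam j).countP (fun p => decide (p = (i, k))) =
      if i ≤ conj n lam j then 1 else 0 := by
  have h := countP_eq_ite_of_nodup (segL n lam j) nodup_segL (i, k)
  by_cases hm : i ≤ conj n lam j
  · rw [if_pos hm, h, if_pos ((mem_segL_iff hi1 hik hk1 hkn hj).mpr hm)]
  · rw [if_neg hm, h, if_neg (fun hc => hm ((mem_segL_iff hi1 hik hk1 hkn hj).mp hc))]

lemma fseg_tag {n : ℕ} {lam : ℕ → ℕ} {s : ℕ} {e : ℕ × ℕ × ℕ} (he : e ∈ fseg n lam s) :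
    e.1 = lam 1 - s := by
  obtain ⟨p, _, rfl⟩ := List.mem_map.mp he; rfl

lemma fseg_root {n : ℕ} {lam : ℕ → ℕ} {s : ℕ} {e : ℕ × ℕ × ℕ} (he : e ∈ fseg n lam s) :
    (e.2.1, e.2.2) ∈ segL n lam (lam 1 - s) := by
  obtain ⟨p, hp, rfl⟩ := List.mem_map.mp he; simpa using hp

/-- The master structure lemma for the λ-chain. -/
lemma chain_struct {n : ℕ} {lam : ℕ → ℕ}
    (hreg : ∀ i, 1 ≤ i → i < n → lam (i + 1) < lam i) {r : ℕ}
    (hr : r < (lamChain n lam).length) :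
    ∃ j0 i k : ℕ, (lamChain n lam).getD r (0, 0, 0) = (j0, i, k) ∧
      2 ≤ j0 ∧ j0 ≤ lam 1 ∧ 1 ≤ i ∧ i ≤ conj n lam j0 ∧ conj n lam j0 < k ∧ k ≤ n ∧
      j0 ≤ lam i ∧ lcount (lamChain n lam) r = lam i + 1 - j0 ∧
      ∀ r', r' ≤ r → j0 ≤ ((lamChain n lam).getD r' (0, 0, 0)).1 := by
  have hrL : r < ((List.range (lam 1 - 1)).flatMap (fseg n lam)).length := by
    rw [← lamChain_eq]; exact hr
  obtain ⟨l₁, x, l₂, o, h1, h2, h3, h4⟩ :=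
    flatMap_decomp (fseg n lam) ((0 : ℕ), (0 : ℕ), (0 : ℕ)) (List.range (lam 1 - 1)) r hrL
  rw [← lamChain_eq] at h3 h4
  obtain ⟨hx, hxN, hl₁⟩ := range_decomp h1
  subst hx
  have hmem : (fseg n lam l₁.length).getD o (0, 0, 0) ∈ fseg n lam l₁.length := by
    rw [List.getD_eq_getElem _ _ h2]
    exact List.getElem_mem _
  have htag : ((fseg n lam l₁.length).getD o (0, 0, 0)).1 = lam 1 - l₁.length := fseg_tag hmem
  have hroot := fseg_root hmem
  obtain ⟨hb1, hb2, hb3, hb4⟩ := segL_bounds hroot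
  dsimp only at hb1 hb2 hb3 hb4
  refine ⟨lam 1 - l₁.length, ((fseg n lam l₁.length).getD o (0, 0, 0)).2.1,
    ((fseg n lam l₁.length).getD o (0, 0, 0)).2.2, by rw [h3, ← htag], by omega, by omega,
    hb1, hb2, hb3, hb4, ?_, ?_, ?_⟩
  case _ =>
    exact (le_conj_iff hreg hb1 (le_trans hb2 conj_le)).mp hb2
  case _ =>
    -- lcount computation
    have hin : ((fseg n lam l₁.length).getD o (0, 0, 0)).2.1 ≤ n - 1 := le_trans hb2 conj_le
    have hjlam := (le_conj_iff hreg hb1 hin).mp hb2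
    have hlam_le : lam ((fseg n lam l₁.length).getD o (0, 0, 0)).2.1 ≤ lam 1 := by
      rcases Nat.eq_or_lt_of_le hb1 with h | h
      · rw [← h]
      · exact lam_anti hreg le_rfl (le_of_lt h) (by omega)
    have step1 : lcount (lamChain n lam) r =
        ((lamChain n lam).take (r + 1)).countP
          (fun e' => decide (e'.2 = ((fseg n lam l₁.length).getD o (0, 0, 0)).2)) := by
      unfold lcount
      rw [← List.countP_eq_length_filter,
        take_eq_map_range (lamChain n lam) (0, 0, 0) (r + 1) (by omega), List.countP_map]
      apply List.countP_congr
      intro a _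
      simp only [Function.comp, decide_eq_decide, h3]
    rw [step1, h4, List.countP_append]
    have hcc : ∀ s : ℕ, ((fseg n lam s).countP
        (fun e' => decide (e'.2 = ((fseg n lam l₁.length).getD o (0, 0, 0)).2))) =
        ((segL n lam (lam 1 - s)).countP
          (fun p => decide (p = (((fseg n lam l₁.length).getD o (0, 0, 0)).2.1,
            ((fseg n lam l₁.length).getD o (0, 0, 0)).2.2)))) := by
      intro s
      unfold fseg
      rw [List.countP_map]
      apply List.countP_congr
      intro a _
      simp [decide_eq_decide]
    -- prefix part
    have hpre : (l₁.flatMap (fseg n lam)).countP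
        (fun e' => decide (e'.2 = ((fseg n lam l₁.length).getD o (0, 0, 0)).2)) =
        l₁.length - (lam 1 - lam ((fseg n lam l₁.length).getD o (0, 0, 0)).2.1) := by
      rw [congrArg (fun t : List ℕ => t.flatMap (fseg n lam)) hl₁, countP_flatMap,
        sum_map_list_range]
      have hterm : ∀ s ∈ Finset.range l₁.length,
          ((fseg n lam s).countP
            (fun e' => decide (e'.2 = ((fseg n lam l₁.length).getD o (0, 0, 0)).2))) =
            if lam 1 - lam ((fseg n lam l₁.length).getD o (0, 0, 0)).2.1 ≤ s then 1 else 0 := by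
        intro s hs
        rw [Finset.mem_range] at hs
        rw [hcc s, countP_segL hb1 hb2 hb3 hb4 (by omega)]
        have hiff : (((fseg n lam l₁.length).getD o (0, 0, 0)).2.1 ≤ conj n lam (lam 1 - s)) ↔
            (lam 1 - lam ((fseg n lam l₁.length).getD o (0, 0, 0)).2.1 ≤ s) := by
          rw [le_conj_iff hreg hb1 hin]; omega
        exact if_congr hiff rfl rfl
      rw [Finset.sum_congr rfl hterm, ← Finset.card_filter]
      have heq : (Finset.range l₁.length).filter
          (fun s => lam 1 - lam ((fseg n lam l₁.length).getD o (0, 0, 0)).2.1 ≤ s) =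
          Finset.Ico (lam 1 - lam ((fseg n lam l₁.length).getD o (0, 0, 0)).2.1) l₁.length := by
        ext a; simp [Finset.mem_filter, Finset.mem_Ico, and_comm]
      rw [heq, Nat.card_Ico]
    -- current segment part
    have hcur : ((fseg n lam l₁.length).take (o + 1)).countP
        (fun e' => decide (e'.2 = ((fseg n lam l₁.length).getD o (0, 0, 0)).2)) = 1 := by
      have hlen : o < ((fseg n lam l₁.length).take (o + 1)).length := by
        rw [List.length_take]; omega
      have hmem2 : (fseg n lam l₁.length).getD o (0, 0, 0) ∈
          (fseg n lam l₁.length).take (o + 1) := by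
        have hh : ((fseg n lam l₁.length).take (o + 1))[o]'hlen =
            (fseg n lam l₁.length)[o]'h2 := List.getElem_take
        rw [List.getD_eq_getElem _ _ h2, ← hh]
        exact List.getElem_mem _
      have hge : 1 ≤ ((fseg n lam l₁.length).take (o + 1)).countP
          (fun e' => decide (e'.2 = ((fseg n lam l₁.length).getD o (0, 0, 0)).2)) := by
        rw [Nat.one_le_iff_ne_zero, ← Nat.pos_iff_ne_zero, List.countP_pos_iff]
        exact ⟨_, hmem2, by simp⟩
      have hle := (List.take_sublist (o + 1) (fseg n lam l₁.length)).countP_le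
          (p := fun e' => decide (e'.2 = ((fseg n lam l₁.length).getD o (0, 0, 0)).2))
      have hfull : (fseg n lam l₁.length).countP
          (fun e' => decide (e'.2 = ((fseg n lam l₁.length).getD o (0, 0, 0)).2)) ≤ 1 := by
        rw [hcc l₁.length]
        have h := countP_eq_ite_of_nodup (segL n lam (lam 1 - l₁.length)) nodup_segL
          (((fseg n lam l₁.length).getD o (0, 0, 0)).2.1,
            ((fseg n lam l₁.length).getD o (0, 0, 0)).2.2)
        rw [h]
        split_ifs <;> omega
      omega
    rw [hpre, hcur]
    omega
  case _ =>
    -- tag monotonicity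
    intro r' hr'
    have hr'len : r' < (lamChain n lam).length := by omega
    have hlen2 : r' < ((lamChain n lam).take (r + 1)).length := by
      rw [List.length_take]; omega
    have hmem3 : (lamChain n lam).getD r' (0, 0, 0) ∈ (lamChain n lam).take (r + 1) := by
      have hh : ((lamChain n lam).take (r + 1))[r']'hlen2 = (lamChain n lam)[r']'hr'len :=
        List.getElem_take
      rw [List.getD_eq_getElem _ _ hr'len, ← hh]
      exact List.getElem_mem _
    rw [h4] at hmem3
    rcases List.mem_append.mp hmem3 with hA | hB
    · obtain ⟨s, hs, hse⟩ := List.mem_flatMap.mp hA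
      rw [hl₁, List.mem_range] at hs
      rw [fseg_tag hse]
      omega
    · rw [fseg_tag (List.mem_of_mem_take hB)]

/-! ### Permutation and content lemmas -/

lemma applyTs_cons {n : ℕ} [NeZero n] (w : Equiv.Perm (Fin n)) (p : ℕ × ℕ)
    (L : List (ℕ × ℕ)) : applyTs w (p :: L) = applyTs (w * tr n p.1 p.2) L := rfl

lemma idx_val {n : ℕ} [NeZero n] {a : ℕ} (h1 : 1 ≤ a) (h2 : a ≤ n) :
    (idx n a).val = a - 1 := by
  have hp : 0 < n := Nat.pos_of_ne_zero (NeZero.ne n)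
  simp only [idx]
  exact Nat.mod_eq_of_lt (by omega)

lemma idx_inj {n : ℕ} [NeZero n] {a b : ℕ} (ha1 : 1 ≤ a) (ha2 : a ≤ n)
    (hb1 : 1 ≤ b) (hb2 : b ≤ n) : idx n a = idx n b ↔ a = b := by
  rw [Fin.ext_iff, idx_val ha1 ha2, idx_val hb1 hb2]
  omega

lemma pv_eq_iff {n : ℕ} [NeZero n] (w : Equiv.Perm (Fin n)) (a : ℕ) (x : Fin n) :
    pv w a = x.val + 1 ↔ w (idx n a) = x := by
  unfold pv
  rw [Fin.ext_iff]
  omega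

lemma mem_cells {n : ℕ} {lam : ℕ → ℕ} {c : ℕ × ℕ} :
    c ∈ cells n lam ↔ 1 ≤ c.1 ∧ c.1 ≤ n - 1 ∧ 1 ≤ c.2 ∧ c.2 ≤ lam c.1 ∧ c.2 ≤ lam 1 := by
  unfold cells
  simp only [Finset.mem_filter, Finset.mem_product, Finset.mem_Icc]
  tauto

lemma card_cells_row {n : ℕ} {lam : ℕ → ℕ}
    (hreg : ∀ i, 1 ≤ i → i < n → lam (i + 1) < lam i) (hzero : lam n = 0)
    {i0 : ℕ} (h1 : 1 ≤ i0) (h2 : i0 ≤ n) :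
    ((cells n lam).filter fun c => c.1 = i0).card = lam i0 := by
  rcases Nat.lt_or_ge i0 n with h | h
  · have hle : lam i0 ≤ lam 1 := lam_anti hreg le_rfl h1 (by omega)
    have hset : (cells n lam).filter (fun c => c.1 = i0) =
        (Finset.Icc 1 (lam i0)).image (fun j => (i0, j)) := by
      ext ⟨a, b⟩
      simp only [Finset.mem_filter, Finset.mem_image, Finset.mem_Icc, mem_cells]
      constructor
      · rintro ⟨⟨ha1, ha2, hb1, hb2, hb3⟩, rfl⟩
        exact ⟨b, ⟨hb1, hb2⟩, rfl⟩
      · rintro ⟨j, ⟨hj1, hj2⟩, hh⟩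
        obtain ⟨rfl, rfl⟩ := (Prod.mk.injEq _ _ _ _).mp hh
        exact ⟨⟨h1, by omega, hj1, hj2, by omega⟩, rfl⟩
    rw [hset, Finset.card_image_of_injective _
      (fun p q hpq => ((Prod.mk.injEq _ _ _ _).mp hpq).2), Nat.card_Icc]
    omega
  · have hi0 : i0 = n := by omega
    rw [hi0]
    have hset : (cells n lam).filter (fun c => c.1 = n) = ∅ := by
      apply Finset.filter_eq_empty_iff.mpr
      intro c hc
      rw [mem_cells] at hc
      omega
    rw [hset, Finset.card_empty, hzero]

lemma card_cells_row_ge {n : ℕ} {lam : ℕ → ℕ}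
    (hreg : ∀ i, 1 ≤ i → i < n → lam (i + 1) < lam i)
    {i0 j0 : ℕ} (h1 : 1 ≤ i0) (h2 : i0 ≤ n - 1) (hn : 2 ≤ n) (hj : 1 ≤ j0) :
    ((cells n lam).filter fun c => c.1 = i0 ∧ j0 ≤ c.2).card = lam i0 + 1 - j0 := by
  have hle : lam i0 ≤ lam 1 := lam_anti hreg le_rfl h1 (by omega)
  have hset : (cells n lam).filter (fun c => c.1 = i0 ∧ j0 ≤ c.2) =
      (Finset.Icc j0 (lam i0)).image (fun j => (i0, j)) := by
    ext ⟨a, b⟩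
    simp only [Finset.mem_filter, Finset.mem_image, Finset.mem_Icc, mem_cells]
    constructor
    · rintro ⟨⟨ha1, ha2, hb1, hb2, hb3⟩, rfl, hb4⟩
      exact ⟨b, ⟨hb4, hb2⟩, rfl⟩
    · rintro ⟨j, ⟨hj1, hj2⟩, hh⟩
      obtain ⟨rfl, rfl⟩ := (Prod.mk.injEq _ _ _ _).mp hh
      exact ⟨⟨h1, h2, by omega, hj2, by omega⟩, rfl, hj1⟩
  rw [hset, Finset.card_image_of_injective _
    (fun p q hpq => ((Prod.mk.injEq _ _ _ _).mp hpq).2), Nat.card_Icc]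

lemma chainRoots_getD (Γ : List (ℕ × ℕ × ℕ)) (r : ℕ) (hr : r < Γ.length) :
    (chainRoots Γ).getD r (0, 0) = (Γ.getD r (0, 0, 0)).2 := by
  unfold chainRoots
  rw [List.getD_eq_getElem _ _ (by simpa using hr), List.getD_eq_getElem _ _ hr,
    List.getElem_map]

lemma pickP_min_cons (Δ : List (ℕ × ℕ)) (J : Finset ℕ) (hne : J.Nonempty) :
    pickP Δ J = Δ.getD (J.min' hne) (0, 0) :: pickP Δ (J.erase (J.min' hne)) := by
  unfold pickP
  rw [sort_min_cons J hne, List.map_cons]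

lemma muT_min_cons (n : ℕ) [NeZero n] (lam : ℕ → ℕ) (J : Finset ℕ) (hne : J.Nonempty) :
    muT n lam J = hatr n (lamChain n lam) (J.min' hne)
      (muT n lam (J.erase (J.min' hne))) := by
  unfold muT
  rw [sort_min_cons J hne, List.foldr_cons]

lemma pij_eq_self {n : ℕ} [NeZero n] {lam : ℕ → ℕ} (w : Equiv.Perm (Fin n))
    (J : Finset ℕ) (j : ℕ)
    (h : ∀ ρ ∈ J, ((lamChain n lam).getD ρ (0, 0, 0)).1 ≤ j) :
    pij n lam w J j = w := by
  unfold pij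
  have hemp : J.filter (fun r => j < ((lamChain n lam).getD r (0, 0, 0)).1) = ∅ := by
    apply Finset.filter_eq_empty_iff.mpr
    intro ρ hρ
    exact not_lt.mpr (h ρ hρ)
  rw [hemp]
  unfold pickP
  rw [Finset.sort_empty]
  rfl

lemma pij_step {n : ℕ} [NeZero n] {lam : ℕ → ℕ} (w : Equiv.Perm (Fin n)) (J : Finset ℕ)
    (hne : J.Nonempty) (hr0 : J.min' hne < (lamChain n lam).length) {j0 i k : ℕ}
    (he : (lamChain n lam).getD (J.min' hne) (0, 0, 0) = (j0, i, k)) (j : ℕ) (hlt : j < j0) :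
    pij n lam w J j = pij n lam (w * tr n i k) (J.erase (J.min' hne)) j := by
  unfold pij
  have hr0f : J.min' hne ∈ J.filter
      (fun r => j < ((lamChain n lam).getD r (0, 0, 0)).1) :=
    Finset.mem_filter.mpr ⟨J.min'_mem hne, by rw [he]; exact hlt⟩
  have hne2 : (J.filter (fun r => j < ((lamChain n lam).getD r (0, 0, 0)).1)).Nonempty :=
    ⟨_, hr0f⟩
  have hmin : (J.filter (fun r => j < ((lamChain n lam).getD r (0, 0, 0)).1)).min' hne2 =
      J.min' hne :=
    le_antisymm (Finset.min'_le _ _ hr0f)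
      (Finset.le_min' _ _ _ fun y hy => J.min'_le y (Finset.mem_filter.mp hy).1)
  rw [pickP_min_cons _ _ hne2, hmin, applyTs_cons, chainRoots_getD _ _ hr0, he]
  congr 1
  rw [Finset.filter_erase]

lemma wAct_hatr {n : ℕ} [NeZero n] (Γ : List (ℕ × ℕ × ℕ)) (r : ℕ) {j0 i k : ℕ}
    (he : Γ.getD r (0, 0, 0) = (j0, i, k)) (hne : idx n i ≠ idx n k)
    (w : Equiv.Perm (Fin n)) (v : Fin n → ℝ) (x : Fin n) :
    wAct w (hatr n Γ r v) x =
      wAct (w * tr n i k) v x + (lcount Γ r : ℝ) *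
        ((if w (idx n i) = x then (1 : ℝ) else 0) -
          (if w (idx n k) = x then (1 : ℝ) else 0)) := by
  unfold wAct hatr tr
  rw [he]
  dsimp only
  have hinv : (w * Equiv.swap (idx n i) (idx n k))⁻¹ x
      = Equiv.swap (idx n i) (idx n k) (w⁻¹ x) := by
    rw [mul_inv_rev, Equiv.Perm.mul_apply, Equiv.swap_inv]
  rw [hinv]
  have hxI : (w (idx n i) = x) ↔ (w⁻¹ x = idx n i) := by
    constructor
    · intro h; rw [← h]; simp
    · intro h; rw [← h]; simp
  have hxK : (w (idx n k) = x) ↔ (w⁻¹ x = idx n k) := by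
    constructor
    · intro h; rw [← h]; simp
    · intro h; rw [← h]; simp
  simp only [hxI, hxK]
  by_cases h1 : w⁻¹ x = idx n i
  · rw [h1, Equiv.swap_apply_left]
    simp only [if_pos rfl, if_neg hne, if_true]
    ring
  · by_cases h2 : w⁻¹ x = idx n k
    · rw [h2, Equiv.swap_apply_right]
      simp only [if_pos rfl, if_neg (Ne.symm hne), if_true]
      ring
    · rw [Equiv.swap_apply_of_ne_of_ne h1 h2]
      simp only [if_neg h1, if_neg h2]
      ring

/-- The core identity: the content vector of `f(w,T)` equals `w(μ(T))` exactly. -/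
lemma core_content {n : ℕ} [NeZero n] (hn : 2 ≤ n) (lam : ℕ → ℕ)
    (hreg : ∀ i, 1 ≤ i → i < n → lam (i + 1) < lam i) (hzero : lam n = 0) :
    ∀ (N : ℕ) (J : Finset ℕ), J.card = N → J ⊆ Finset.range (lamChain n lam).length →
      ∀ (w : Equiv.Perm (Fin n)) (x : Fin n),
        contentVec n lam (fmap n lam w J) x = wAct w (muT n lam J) x := by
  have hcv : ∀ (σ : ℕ × ℕ → ℕ) (x : Fin n), contentVec n lam σ x =
      ∑ c ∈ cells n lam, (if σ c = x.val + 1 then (1 : ℝ) else 0) := by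
    intro σ x
    unfold contentVec
    rw [Finset.card_filter]
    push_cast
    rfl
  intro N
  induction N with
  | zero =>
    intro J hcard hJsub w x
    rw [Finset.card_eq_zero] at hcard
    subst hcard
    have hw : wAct w (muT n lam ∅) x = (lam ((w⁻¹ x).val + 1) : ℝ) := by
      unfold muT wAct
      rw [Finset.sort_empty, List.foldr_nil]
    rw [hw]
    unfold contentVec
    have hfil : (cells n lam).filter (fun c => fmap n lam w ∅ c = x.val + 1) =
        (cells n lam).filter (fun c => c.1 = (w⁻¹ x).val + 1) := by
      apply Finset.filter_congr
      intro c hc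
      have hcc := mem_cells.mp hc
      have hfm : fmap n lam w ∅ c = pv w c.1 := by
        unfold fmap
        rw [if_pos hc, pij_eq_self w ∅ c.2 (by intro ρ hρ; simp at hρ)]
      rw [hfm, pv_eq_iff]
      constructor
      · intro h
        have hh : idx n c.1 = w⁻¹ x := by rw [← h]; simp
        have hv := congrArg Fin.val hh
        rw [idx_val hcc.1 (by omega)] at hv
        omega
      · intro h
        have hh : idx n c.1 = w⁻¹ x := by
          rw [Fin.ext_iff, idx_val hcc.1 (by omega)]
          omega
        rw [hh]; simp
    rw [hfil, card_cells_row hreg hzero (by omega) (by have := (w⁻¹ x).isLt; omega)]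
  | succ N ih =>
    intro J hcard hJsub w x
    have hne : J.Nonempty := Finset.card_pos.mp (by omega)
    have hr0J : J.min' hne ∈ J := J.min'_mem hne
    have hr0 : J.min' hne < (lamChain n lam).length := by
      have := hJsub hr0J; rwa [Finset.mem_range] at this
    obtain ⟨j0, i, k, he, hj02, hj0m, hi1, hi2, hk1, hk2, hjlam, hlc, _⟩ :=
      chain_struct hreg hr0
    have hik : i < k := lt_of_le_of_lt hi2 hk1
    have hin1 : i ≤ n - 1 := le_trans hi2 conj_le
    have hIK : idx n i ≠ idx n k := by
      rw [Ne, idx_inj hi1 (by omega) (by omega) hk2]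
      omega
    have hcard' : (J.erase (J.min' hne)).card = N := by
      rw [Finset.card_erase_of_mem hr0J]; omega
    have hJ'sub : J.erase (J.min' hne) ⊆ Finset.range (lamChain n lam).length :=
      (Finset.erase_subset _ _).trans hJsub
    have htagJ : ∀ ρ ∈ J, ((lamChain n lam).getD ρ (0, 0, 0)).1 ≤ j0 := by
      intro ρ hρ
      have hρlen : ρ < (lamChain n lam).length := by
        have := hJsub hρ; rwa [Finset.mem_range] at this
      obtain ⟨a, b, c, hea, _, _, _, _, _, _, _, _, htagm'⟩ := chain_struct hreg hρlen
      have h1 := htagm' (J.min' hne) (J.min'_le ρ hρ)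
      rw [he] at h1
      rw [hea]
      exact h1
    have hlamk : lam k < j0 := by
      rcases Nat.lt_or_ge k n with h | h
      · by_contra hcon
        push_neg at hcon
        have := (le_conj_iff hreg (by omega) (by omega)).mpr hcon
        omega
      · have hkn' : k = n := by omega
        rw [hkn', hzero]
        omega
    have hmu := wAct_hatr (lamChain n lam) (J.min' hne) he hIK w
      (muT n lam (J.erase (J.min' hne))) x
    rw [muT_min_cons n lam J hne, hmu, ← ih _ hcard' hJ'sub (w * tr n i k) x]
    rw [hcv, hcv]
    have key : ∀ c ∈ cells n lam,
        (if fmap n lam w J c = x.val + 1 then (1 : ℝ) else 0) =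
        (if fmap n lam (w * tr n i k) (J.erase (J.min' hne)) c = x.val + 1
          then (1 : ℝ) else 0) +
        (if c.1 = i ∧ j0 ≤ c.2 then
          ((if w (idx n i) = x then (1 : ℝ) else 0) -
            (if w (idx n k) = x then (1 : ℝ) else 0)) else 0) := by
      intro c hc
      have hcells := mem_cells.mp hc
      by_cases hcol : c.2 < j0
      · have hnind : ¬ (c.1 = i ∧ j0 ≤ c.2) := fun hh => by omega
        rw [if_neg hnind, add_zero]
        have hfm : fmap n lam w J c =
            fmap n lam (w * tr n i k) (J.erase (J.min' hne)) c := by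
          unfold fmap
          rw [if_pos hc, if_pos hc, pij_step w J hne hr0 he c.2 hcol]
        rw [hfm]
      · have h1 : fmap n lam w J c = pv w c.1 := by
          unfold fmap
          rw [if_pos hc, pij_eq_self _ _ _ (fun ρ hρ => le_trans (htagJ ρ hρ) (by omega))]
        have h2 : fmap n lam (w * tr n i k) (J.erase (J.min' hne)) c =
            pv (w * tr n i k) c.1 := by
          unfold fmap
          rw [if_pos hc, pij_eq_self _ _ _
            (fun ρ hρ => le_trans (htagJ ρ (Finset.mem_of_mem_erase hρ)) (by omega))]
        by_cases hrow : c.1 = i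
        · have hind : c.1 = i ∧ j0 ≤ c.2 := ⟨hrow, by omega⟩
          rw [if_pos hind, h1, h2, hrow]
          have hpv2 : pv (w * tr n i k) i = pv w k := by
            unfold pv tr
            rw [Equiv.Perm.mul_apply, Equiv.swap_apply_left]
          rw [hpv2]
          simp only [pv_eq_iff]
          ring
        · have hnind : ¬ (c.1 = i ∧ j0 ≤ c.2) := fun hh => hrow hh.1
          rw [if_neg hnind, add_zero, h1, h2]
          have hKne : idx n c.1 ≠ idx n k := by
            intro hh
            have hck : c.1 = k := (idx_inj hcells.1 (by omega) (by omega) hk2).mp hh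
            rw [hck] at hcells
            omega
          have hIne : idx n c.1 ≠ idx n i := by
            rw [Ne, idx_inj hcells.1 (by omega) hi1 (by omega)]
            exact hrow
          have hpv : pv (w * tr n i k) c.1 = pv w c.1 := by
            unfold pv tr
            rw [Equiv.Perm.mul_apply, Equiv.swap_apply_of_ne_of_ne hIne hKne]
          rw [hpv]
    have h1j0 : 1 ≤ j0 := by omega
    have hsumD : ∑ c ∈ cells n lam, (if c.1 = i ∧ j0 ≤ c.2 then
          ((if w (idx n i) = x then (1 : ℝ) else 0) -
            (if w (idx n k) = x then (1 : ℝ) else 0)) else 0) =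
        (lcount (lamChain n lam) (J.min' hne) : ℝ) *
          ((if w (idx n i) = x then (1 : ℝ) else 0) -
            (if w (idx n k) = x then (1 : ℝ) else 0)) := by
      rw [← Finset.sum_filter, Finset.sum_const,
        card_cells_row_ge hreg hi1 hin1 hn h1j0, ← hlc, nsmul_eq_mul]
    rw [Finset.sum_congr rfl key, Finset.sum_add_distrib, hsumD]

/-- For every `w ∈ S_n` and every subsequence `T` of the λ-chain `Γ`, the
content vector of `f(w,T)` is congruent to `w(μ(T))` modulo the line `ℝ(1,…,1) ⊆ ℝⁿ`.
In particular, `w(μ(T))` (mod the line) depends only on the filling `f(w,T)`. -/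
theorem content_eq_w_mu (n : ℕ) [NeZero n] (hn : 2 ≤ n) (lam : ℕ → ℕ)
    (hreg : ∀ i, 1 ≤ i → i < n → lam (i + 1) < lam i) (hzero : lam n = 0)
    (w : Equiv.Perm (Fin n)) (J : Finset ℕ)
    (hJ : J ⊆ Finset.range (lamChain n lam).length) :
    (∃ c : ℝ, ∀ x : Fin n,
        contentVec n lam (fmap n lam w J) x = wAct w (muT n lam J) x + c) ∧
      ∀ (w' : Equiv.Perm (Fin n)) (J' : Finset ℕ),
        J' ⊆ Finset.range (lamChain n lam).length →
          (∀ u ∈ cells n lam, fmap n lam w' J' u = fmap n lam w J u) →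
            ∃ c : ℝ, ∀ x : Fin n,
              wAct w' (muT n lam J') x = wAct w (muT n lam J) x + c := by
  constructor
  · refine ⟨0, fun x => ?_⟩
    rw [core_content hn lam hreg hzero J.card J rfl hJ w x, add_zero]
  · intro w' J' hJ' hagree
    refine ⟨0, fun x => ?_⟩
    rw [add_zero, ← core_content hn lam hreg hzero J'.card J' rfl hJ' w' x,
      ← core_content hn lam hreg hzero J.card J rfl hJ w x]
    unfold contentVec
    have hfil : (cells n lam).filter (fun c => fmap n lam w' J' c = x.val + 1) =
        (cells n lam).filter (fun c => fmap n lam w J c = x.val + 1) := by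
      apply Finset.filter_congr
      intro u hu
      rw [hagree u hu]
    rw [hfil]

end Compress
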